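/- If 2 = a < b, then the automorphism group of C₀(2,b) is the wreath product C₂ ≀ Sym(b) acting on {1,2}×{1,…,b}, where Sym(b) permutes column indices and the base group C₂^b swaps row indices independently in each column. -/

import Mathlib

/-- The elementary row matrix `r_i`: 1's exactly in row `i`. -/
def rowMat (a b : ℕ) (i : Fin a) : Matrix (Fin a) (Fin b) (ZMod 2) :=
  fun i' _ => if i' = i then 1 else 0

/-- The elementary column matrix `c_j`: 1's exactly in column `j`. -/
def colMat (a b : ℕ) (j : Fin b) : Matrix (Fin a) (Fin b) (ZMod 2) :=
  fun _ j' => if j' = j then 1 else 0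

/-- The code `C₀(a,b)`, spanned by the elementary row and column matrices. -/
def C0 (a b : ℕ) : Submodule (ZMod 2) (Matrix (Fin a) (Fin b) (ZMod 2)) :=
  Submodule.span (ZMod 2) (Set.range (rowMat a b) ∪ Set.range (colMat a b))

lemma zmod2_add_self (x : ZMod 2) : x + x = 0 := by
  have h2 : (2 : ZMod 2) = 0 := by decide
  calc x + x = 2 * x := by ring
  _ = 0 := by rw [h2, zero_mul]

lemma fin2_cases : ∀ i : Fin 2, i = 0 ∨ i = 1 := by decide

lemma fin2_cases' : ∀ z x y : Fin 2, x ≠ y → z = x ∨ z = y := by decide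

lemma perm2_cases : ∀ τ0 : Equiv.Perm (Fin 2),
    (τ0 0 = 0 ∧ τ0 1 = 1) ∨ (τ0 0 = 1 ∧ τ0 1 = 0) := by decide

lemma mem_C0_iff {b : ℕ} (hb : 0 < b) (M : Matrix (Fin 2) (Fin b) (ZMod 2)) :
    M ∈ C0 2 b ↔ ∀ j j' : Fin b, M 0 j + M 1 j = M 0 j' + M 1 j' := by
  constructor
  · intro hM j j'
    induction hM using Submodule.span_induction with
    | mem x hx =>
      rcases hx with ⟨i, rfl⟩ | ⟨c, rfl⟩
      · rfl
      · simp only [colMat]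
        rw [zmod2_add_self, zmod2_add_self]
    | zero => simp
    | add x y hx hy ihx ihy =>
      simp only [Matrix.add_apply]
      linear_combination ihx + ihy
    | smul a x hx ih =>
      simp only [Matrix.smul_apply, smul_eq_mul]
      linear_combination a * ih
  · intro hcol
    set z : Fin b := ⟨0, hb⟩ with hz
    have hrepr : M = (M 0 z + M 1 z) • rowMat 2 b 1 + ∑ j, M 0 j • colMat 2 b j := by
      funext i j
      have hsum : (∑ j' : Fin b, M 0 j' • colMat 2 b j') i j = M 0 j := by
        rw [Matrix.sum_apply]
        simp only [Matrix.smul_apply, colMat, smul_eq_mul, mul_ite, mul_one, mul_zero]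
        rw [Finset.sum_ite_eq Finset.univ j (fun j' => M 0 j')]
        simp
      rcases fin2_cases i with rfl | rfl
      · simp only [Matrix.add_apply, Matrix.smul_apply, rowMat, smul_eq_mul]
        rw [hsum]
        norm_num
      · simp only [Matrix.add_apply, Matrix.smul_apply, rowMat, smul_eq_mul]
        rw [hsum]
        rw [if_true, mul_one, ← hcol j z, add_comm, ← add_assoc,
          zmod2_add_self, zero_add]
    rw [hrepr]
    refine Submodule.add_mem _
      (Submodule.smul_mem _ _ (Submodule.subset_span (Or.inl ⟨1, rfl⟩)))
      (Submodule.sum_mem _ fun j _ =>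
        Submodule.smul_mem _ _ (Submodule.subset_span (Or.inr ⟨j, rfl⟩)))

theorem aut_C0_wreath (b : ℕ) (hb : 2 < b) :
    ∀ φ : Equiv.Perm (Fin 2 × Fin b),
      (∀ M ∈ C0 2 b, (fun i j => M (φ (i, j)).1 (φ (i, j)).2) ∈ C0 2 b) ↔
        ∃ (σ : Equiv.Perm (Fin b)) (τ : Fin b → Equiv.Perm (Fin 2)),
          ∀ p : Fin 2 × Fin b, φ p = (τ p.2 p.1, σ p.2) := by
  have hb0 : 0 < b := by omega
  intro φ
  constructor
  · intro h
    -- Step 1: φ maps columns to columns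
    have key : ∀ j : Fin b, (φ (1, j)).2 = (φ (0, j)).2 := by
      intro j
      by_contra hne
      have hM : colMat 2 b (φ (0, j)).2 ∈ C0 2 b :=
        Submodule.subset_span (Or.inr ⟨_, rfl⟩)
      have hN := (mem_C0_iff hb0 _).mp (h _ hM)
      obtain ⟨j'', hj1, hj2⟩ :
          ∃ j'', j'' ≠ (φ.symm (0, (φ (0, j)).2)).2 ∧
            j'' ≠ (φ.symm (1, (φ (0, j)).2)).2 := by
        by_contra hcon
        push_neg at hcon
        have hsub : (Finset.univ : Finset (Fin b)) ⊆
            {(φ.symm (0, (φ (0, j)).2)).2, (φ.symm (1, (φ (0, j)).2)).2} := by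
          intro x _
          by_cases hx : x = (φ.symm (0, (φ (0, j)).2)).2
          · exact Finset.mem_insert.mpr (Or.inl hx)
          · exact Finset.mem_insert.mpr (Or.inr (Finset.mem_singleton.mpr (hcon x hx)))
        have h1 := Finset.card_le_card hsub
        have h2 := Finset.card_insert_le (φ.symm (0, (φ (0, j)).2)).2
          ({(φ.symm (1, (φ (0, j)).2)).2} : Finset (Fin b))
        simp [Finset.card_univ] at h1 h2
        omega
      have hout : ∀ i : Fin 2, (φ (i, j'')).2 ≠ (φ (0, j)).2 := by
        intro i hic
        rcases fin2_cases (φ (i, j'')).1 with h0 | h0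
        · apply hj1
          have he : φ (i, j'') = (0, (φ (0, j)).2) := Prod.ext h0 hic
          have he2 : (i, j'') = φ.symm (0, (φ (0, j)).2) := by
            rw [← he, Equiv.symm_apply_apply]
          exact congrArg Prod.snd he2
        · apply hj2
          have he : φ (i, j'') = (1, (φ (0, j)).2) := Prod.ext h0 hic
          have he2 : (i, j'') = φ.symm (1, (φ (0, j)).2) := by
            rw [← he, Equiv.symm_apply_apply]
          exact congrArg Prod.snd he2
      have hNe := hN j j''
      simp only [colMat, if_pos rfl, if_neg hne, if_neg (hout 0), if_neg (hout 1)] at hNe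
      simp at hNe
    have hsec : ∀ (i : Fin 2) (j : Fin b), (φ (i, j)).2 = (φ (0, j)).2 := by
      intro i j
      rcases fin2_cases i with rfl | rfl
      · rfl
      · exact key j
    have hfstne : ∀ j : Fin b, (φ (0, j)).1 ≠ (φ (1, j)).1 := by
      intro j hfst
      have he : φ (0, j) = φ (1, j) := Prod.ext hfst (key j).symm
      have := φ.injective he
      simp [Prod.ext_iff] at this
    have hσinj : Function.Injective (fun j : Fin b => (φ (0, j)).2) := by
      intro j' j hjj
      simp only at hjj
      rcases fin2_cases' (φ (0, j')).1 (φ (0, j)).1 (φ (1, j)).1 (hfstne j) with h0 | h0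
      · have he : φ (0, j') = φ (0, j) := Prod.ext h0 hjj
        have := φ.injective he
        simpa [Prod.ext_iff] using this
      · have he : φ (0, j') = φ (1, j) := Prod.ext h0 (hjj.trans (key j).symm)
        have := φ.injective he
        simp [Prod.ext_iff] at this
    have hτinj : ∀ j : Fin b, Function.Injective (fun i : Fin 2 => (φ (i, j)).1) := by
      intro j i i' hii
      simp only at hii
      have he : φ (i, j) = φ (i', j) :=
        Prod.ext hii ((hsec i j).trans (hsec i' j).symm)
      have := φ.injective he
      simpa [Prod.ext_iff] using this
    refine ⟨Equiv.ofBijective _ (Finite.injective_iff_bijective.mp hσinj),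
      fun j => Equiv.ofBijective _ (Finite.injective_iff_bijective.mp (hτinj j)),
      fun p => ?_⟩
    simp only [Equiv.ofBijective_apply]
    exact Prod.ext rfl (hsec p.1 p.2)
  · rintro ⟨σ, τ, hφ⟩ M hM
    rw [mem_C0_iff hb0] at hM
    apply (mem_C0_iff hb0 _).mpr
    intro j j'
    have hperm : ∀ (c : Fin b) (τ0 : Equiv.Perm (Fin 2)),
        M (τ0 0) c + M (τ0 1) c = M 0 c + M 1 c := by
      intro c τ0
      rcases perm2_cases τ0 with ⟨h0, h1⟩ | ⟨h0, h1⟩ <;> rw [h0, h1]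
      exact add_comm _ _
    simp only [hφ]
    rw [hperm, hperm]
    exact hM (σ j) (σ j')
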